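/- Let W₁,...,W_N be subspaces of ℝ^M with orthogonal projections P_n, and let F : Sym(M,ℝ) → ℝ^N be the linear map F(A)(n) = Tr(A P_n). Then {W_n} allows phase retrieval if and only if the null space of F contains no nonzero matrix of rank 1 or 2. -/

import Mathlib

open Matrix

section Aux

variable {m : ℕ}

lemma aux_trace_vecMulVec_mul (x y : Fin m → ℝ) (Q : Matrix (Fin m) (Fin m) ℝ) :
    (vecMulVec x y * Q).trace = y ⬝ᵥ Q.mulVec x := by
  simp only [Matrix.trace, Matrix.diag, Matrix.mul_apply, vecMulVec_apply, dotProduct,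
    Matrix.mulVec]
  rw [Finset.sum_comm]
  apply Finset.sum_congr rfl
  intro j _
  rw [Finset.mul_sum]
  apply Finset.sum_congr rfl
  intro i _
  ring

lemma aux_rank_vecMulVec_le (x y : Fin m → ℝ) : (vecMulVec x y).rank ≤ 1 := by
  rw [vecMulVec_eq (Fin 1)]
  exact le_trans (rank_mul_le_left _ _) (le_trans (rank_le_card_width (replicateCol (Fin 1) x)) (by simp))

lemma aux_rank_add_le (A B : Matrix (Fin m) (Fin m) ℝ) :
    (A + B).rank ≤ A.rank + B.rank := by
  unfold Matrix.rank
  rw [mulVecLin_add]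
  refine le_trans (Submodule.finrank_mono ?_) (Submodule.finrank_add_le_finrank_add_finrank _ _)
  intro v hv
  obtain ⟨u, rfl⟩ := hv
  exact Submodule.add_mem_sup (LinearMap.mem_range_self _ u) (LinearMap.mem_range_self _ u)

lemma aux_rank_eq_zero_iff {A : Matrix (Fin m) (Fin m) ℝ} : A.rank = 0 ↔ A = 0 := by
  unfold Matrix.rank
  rw [Submodule.finrank_eq_zero, LinearMap.range_eq_bot]
  constructor
  · intro h
    ext i j
    have := congrFun (LinearMap.congr_fun h (Pi.single j 1)) i
    simpa [mulVec_single_one] using this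
  · rintro rfl; simp

lemma aux_vecMulVec_inj {x y : Fin m → ℝ}
    (h : vecMulVec x x = vecMulVec y y) : x = y ∨ x = -y := by
  have h' : ∀ i j, x i * x j = y i * y j := fun i j => congrFun (congrFun h i) j
  by_cases hy : y = 0
  · subst hy
    left
    funext i
    have := h' i i
    simp only [Pi.zero_apply, mul_zero] at this
    simpa using mul_self_eq_zero.mp this
  · obtain ⟨j, hj⟩ : ∃ j, y j ≠ 0 := by
      by_contra hc
      push_neg at hc
      exact hy (funext hc)
    rcases mul_self_eq_mul_self_iff.mp (h' j j) with hxy | hxy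
    · left
      funext i
      have := h' i j
      rw [hxy] at this
      exact mul_right_cancel₀ (hxy ▸ hj) this
    · right
      funext i
      have := h' i j
      rw [hxy] at this
      have hj' : -y j ≠ 0 := neg_ne_zero.mpr hj
      have : x i * -y j = -y i * -y j := by rw [this]; ring
      simpa using mul_right_cancel₀ hj' this

lemma aux_sum_mulVec {ι : Type*} (s : Finset ι) (C : ι → Matrix (Fin m) (Fin m) ℝ)
    (v : Fin m → ℝ) : (∑ i ∈ s, C i) *ᵥ v = ∑ i ∈ s, C i *ᵥ v := by
  funext k
  simp only [Matrix.mulVec, dotProduct, Finset.sum_apply, Matrix.sum_apply, Finset.sum_mul]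
  exact Finset.sum_comm

lemma aux_eigen_dot {A : Matrix (Fin m) (Fin m) ℝ} (hA : A.IsHermitian) (i j : Fin m) :
    (⇑(hA.eigenvectorBasis i) : Fin m → ℝ) ⬝ᵥ ⇑(hA.eigenvectorBasis j) =
      if i = j then 1 else 0 := by
  have := orthonormal_iff_ite.mp hA.eigenvectorBasis.orthonormal i j
  simpa [PiLp.inner_apply, RCLike.inner_apply, dotProduct, mul_comm] using this

/-- Spectral decomposition of a real symmetric matrix as a sum of rank-one matrices. -/
lemma aux_spectral (A : Matrix (Fin m) (Fin m) ℝ) (hA : A.IsHermitian) :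
    A = ∑ i, hA.eigenvalues i •
      vecMulVec (⇑(hA.eigenvectorBasis i)) (⇑(hA.eigenvectorBasis i)) := by
  set b := hA.eigenvectorBasis with hb
  have hdot : ∀ i j, (⇑(b i) : Fin m → ℝ) ⬝ᵥ ⇑(b j) = if i = j then 1 else 0 :=
    fun i j => aux_eigen_dot hA i j
  -- show the two matrices act identically on the eigenbasis
  have key : ∀ j, A *ᵥ ⇑(b j) =
      (∑ i, hA.eigenvalues i • vecMulVec (⇑(b i)) (⇑(b i))) *ᵥ ⇑(b j) := by
    intro j
    rw [hA.mulVec_eigenvectorBasis]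
    rw [aux_sum_mulVec]
    have : ∀ i, (hA.eigenvalues i • vecMulVec (⇑(b i)) (⇑(b i))) *ᵥ ⇑(b j)
        = (if i = j then hA.eigenvalues j else 0) • ⇑(b j) := by
      intro i
      rw [Matrix.smul_mulVec]
      have : vecMulVec (⇑(b i)) (⇑(b i)) *ᵥ ⇑(b j) = ((⇑(b i)) ⬝ᵥ ⇑(b j)) • ⇑(b i) := by
        funext k
        simp only [vecMulVec_apply, Matrix.mulVec, dotProduct, Pi.smul_apply, smul_eq_mul,
          Finset.sum_mul]
        exact Finset.sum_congr rfl fun x _ => by ring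
      rw [this, hdot i j]
      by_cases hij : i = j
      · subst hij; simp
      · simp [hij]
    rw [Finset.sum_congr rfl fun i _ => this i]
    simp [ite_smul, hb]
  -- conclude matrix equality
  set B := ∑ i, hA.eigenvalues i • vecMulVec (⇑(b i)) (⇑(b i)) with hB
  have hlin : A.mulVecLin ∘ₗ (WithLp.linearEquiv 2 ℝ (Fin m → ℝ)).toLinearMap =
      B.mulVecLin ∘ₗ (WithLp.linearEquiv 2 ℝ (Fin m → ℝ)).toLinearMap := by
    apply b.toBasis.ext
    intro j
    simp only [LinearMap.comp_apply, LinearEquiv.coe_coe, WithLp.linearEquiv_apply,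
      OrthonormalBasis.coe_toBasis, mulVecLin_apply]
    exact key j
  have hall : ∀ v, A *ᵥ v = B *ᵥ v := by
    intro v
    have := LinearMap.congr_fun hlin ((WithLp.linearEquiv 2 ℝ (Fin m → ℝ)).symm v)
    simpa using this
  ext i j
  have := congrFun (hall (Pi.single j 1)) i
  simpa [mulVec_single_one] using this

end Aux

/-- With F(A)(n) = Tr(A P_n) on symmetric matrices, the projections {P_n} allow phase
retrieval iff the null space of F contains no nonzero matrix of rank 1 or 2. -/
theorem stmt_8 (M N : ℕ) (P : Fin N → Matrix (Fin M) (Fin M) ℝ)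
    (hsymm : ∀ n, (P n)ᵀ = P n) (hidem : ∀ n, P n * P n = P n) :
    (∀ x y : Fin M → ℝ,
        (∀ n, x ⬝ᵥ (P n).mulVec x = y ⬝ᵥ (P n).mulVec y) → x = y ∨ x = -y) ↔
    ¬ ∃ A : Matrix (Fin M) (Fin M) ℝ, Aᵀ = A ∧ (∀ n, (A * P n).trace = 0) ∧
        (A.rank = 1 ∨ A.rank = 2) := by
  have hq : ∀ n (u : Fin M → ℝ),
      u ⬝ᵥ (P n).mulVec u = (P n).mulVec u ⬝ᵥ (P n).mulVec u := by
    intro n u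
    have hvm : u ᵥ* P n = P n *ᵥ u := by
      conv_lhs => rw [← hsymm n]
      rw [vecMul_transpose]
    conv_lhs => rw [← hidem n, ← Matrix.mulVec_mulVec, dotProduct_mulVec, hvm]
  have hq0 : ∀ n (u : Fin M → ℝ), 0 ≤ u ⬝ᵥ (P n).mulVec u := by
    intro n u
    rw [hq]
    exact Finset.sum_nonneg fun i _ => mul_self_nonneg _
  have hqsmul : ∀ n (c : ℝ) (u : Fin M → ℝ),
      (c • u) ⬝ᵥ (P n).mulVec (c • u) = c * c * (u ⬝ᵥ (P n).mulVec u) := by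
    intro n c u
    rw [Matrix.mulVec_smul, smul_dotProduct, dotProduct_smul]
    simp [mul_assoc]
  constructor
  · intro h
    rintro ⟨A, hAs, htr, hrank⟩
    have hA : A.IsHermitian := by
      rwa [Matrix.IsHermitian, conjTranspose_eq_transpose_of_trivial]
    set lam := hA.eigenvalues with hlam
    set b := hA.eigenvectorBasis with hb
    have htr' : ∀ n, ∑ i, lam i * ((⇑(b i)) ⬝ᵥ (P n).mulVec (⇑(b i))) = 0 := by
      intro n
      have h0 := htr n
      conv_lhs at h0 => rw [aux_spectral A hA]
      rw [Finset.sum_mul] at h0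
      rw [trace_sum] at h0
      rw [← h0]
      apply Finset.sum_congr rfl
      intro i _
      rw [smul_mul_assoc, trace_smul, aux_trace_vecMulVec_mul]
      simp [hlam, hb]
    -- a basis vector cannot have vanishing measurements
    have hbnz : ∀ i, ¬ (∀ n, (⇑(b i) : Fin M → ℝ) ⬝ᵥ (P n).mulVec (⇑(b i)) = 0) := by
      intro i hzero
      have hcase := h (⇑(b i)) 0 (fun n => by rw [hzero n]; simp)
      have hb0 : (⇑(b i) : Fin M → ℝ) = 0 := by
        rcases hcase with h' | h'
        · exact h'
        · simpa using h'
      have hne := b.orthonormal.ne_zero i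
      have : (⇑(b i) : Fin M → ℝ) ⬝ᵥ ⇑(b i) = 1 := by simp [hb, aux_eigen_dot hA i i]
      rw [hb0] at this
      simpa using this
    rcases hrank with h1 | h2
    · -- rank one case
      rw [hA.rank_eq_card_non_zero_eigs] at h1
      obtain ⟨⟨i0, hi0⟩, huniq⟩ := Fintype.card_eq_one_iff.mp h1
      apply hbnz i0
      intro n
      have hsum : lam i0 * ((⇑(b i0)) ⬝ᵥ (P n).mulVec (⇑(b i0))) = 0 := by
        rw [← htr' n]
        symm
        apply Finset.sum_eq_single i0
        · intro i _ hne
          have hz : lam i = 0 := by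
            by_contra hc
            exact hne (congrArg Subtype.val (huniq ⟨i, hc⟩))
          simp [hz]
        · simp
      rcases mul_eq_zero.mp hsum with h' | h'
      · exact absurd h' hi0
      · exact h'
    · -- rank two case
      rw [hA.rank_eq_card_non_zero_eigs] at h2
      obtain ⟨u, v, huv, hcov⟩ := Finset.card_eq_two.mp h2
      set i := u.1 with hi_def
      set j := v.1 with hj_def
      have hi : lam i ≠ 0 := u.2
      have hj : lam j ≠ 0 := v.2
      have hij : i ≠ j := fun hx => huv (Subtype.ext hx)
      have hcov' : ∀ k, lam k ≠ 0 → k = i ∨ k = j := by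
        intro k hk
        have : (⟨k, hk⟩ : {i // lam i ≠ 0}) ∈ ({u, v} : Finset {i // lam i ≠ 0}) := by
          rw [← hcov]; exact Finset.mem_univ _
        rcases Finset.mem_insert.mp this with h' | h'
        · left; exact congrArg Subtype.val h'
        · right; exact congrArg Subtype.val (Finset.mem_singleton.mp h')
      have hsum2 : ∀ n, lam i * ((⇑(b i)) ⬝ᵥ (P n).mulVec (⇑(b i)))
          + lam j * ((⇑(b j)) ⬝ᵥ (P n).mulVec (⇑(b j))) = 0 := by
        intro n
        rw [← htr' n]
        have hpair := Finset.sum_pair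
          (f := fun k => lam k * ((⇑(b k)) ⬝ᵥ (P n).mulVec (⇑(b k)))) hij
        rw [← hpair]
        apply Finset.sum_subset (Finset.subset_univ _)
        intro k _ hk
        have hz : lam k = 0 := by
          by_contra hc
          rcases hcov' k hc with rfl | rfl
          · exact hk (by simp)
          · exact hk (by simp)
        simp [hz]
      -- helper for the mixed-sign case
      have hmix : ∀ i j : Fin M, i ≠ j → 0 < lam i → lam j < 0 →
          (∀ n, lam i * ((⇑(b i)) ⬝ᵥ (P n).mulVec (⇑(b i)))
            + lam j * ((⇑(b j)) ⬝ᵥ (P n).mulVec (⇑(b j))) = 0) → False := by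
        intro i j hij hpi hnj hs
        set x : Fin M → ℝ := Real.sqrt (lam i) • ⇑(b i) with hx
        set y : Fin M → ℝ := Real.sqrt (-lam j) • ⇑(b j) with hy
        have hqx : ∀ n, x ⬝ᵥ (P n).mulVec x = lam i * ((⇑(b i)) ⬝ᵥ (P n).mulVec (⇑(b i))) := by
          intro n
          rw [hx, hqsmul, Real.mul_self_sqrt hpi.le]
        have hqy : ∀ n, y ⬝ᵥ (P n).mulVec y
            = -lam j * ((⇑(b j)) ⬝ᵥ (P n).mulVec (⇑(b j))) := by
          intro n
          rw [hy, hqsmul, Real.mul_self_sqrt (neg_nonneg.mpr hnj.le)]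
        have hmeas : ∀ n, x ⬝ᵥ (P n).mulVec x = y ⬝ᵥ (P n).mulVec y := by
          intro n
          rw [hqx n, hqy n]
          have := hs n
          linarith
        have hxy := h x y hmeas
        have hxx : x ⬝ᵥ x = lam i := by
          rw [hx, smul_dotProduct, dotProduct_smul, aux_eigen_dot hA i i]
          simp [Real.mul_self_sqrt hpi.le]
        have hxydot : x ⬝ᵥ y = 0 := by
          rw [hx, hy, smul_dotProduct, dotProduct_smul, aux_eigen_dot hA i j]
          simp [hij]
        rcases hxy with h' | h'
        · rw [h'] at hxx hxydot
          rw [hxydot] at hxx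
          exact hpi.ne' hxx.symm
        · rw [h'] at hxx hxydot
          rw [neg_dotProduct, dotProduct_neg, neg_neg] at hxx
          rw [neg_dotProduct, neg_eq_zero] at hxydot
          rw [hxydot] at hxx
          exact hpi.ne' hxx.symm
      rcases lt_trichotomy (lam i) 0 with hni | hzi | hpi
      · rcases lt_trichotomy (lam j) 0 with hnj | hzj | hpj
        · -- both negative
          apply hbnz i
          intro n
          have h1 := hsum2 n
          have t1 : lam i * ((⇑(b i)) ⬝ᵥ (P n).mulVec (⇑(b i))) ≤ 0 :=
            mul_nonpos_iff.mpr (Or.inr ⟨hni.le, hq0 n _⟩)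
          have t2 : lam j * ((⇑(b j)) ⬝ᵥ (P n).mulVec (⇑(b j))) ≤ 0 :=
            mul_nonpos_iff.mpr (Or.inr ⟨hnj.le, hq0 n _⟩)
          have : lam i * ((⇑(b i)) ⬝ᵥ (P n).mulVec (⇑(b i))) = 0 := by linarith
          rcases mul_eq_zero.mp this with h' | h'
          · exact absurd h' hi
          · exact h'
        · exact absurd hzj hj
        · -- lam j > 0 > lam i : mixed
          exact hmix j i hij.symm hpj hni (fun n => by have := hsum2 n; linarith)
      · exact absurd hzi hi
      · rcases lt_trichotomy (lam j) 0 with hnj | hzj | hpj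
        · exact hmix i j hij hpi hnj hsum2
        · exact absurd hzj hj
        · -- both positive
          apply hbnz i
          intro n
          have h1 := hsum2 n
          have t1 : 0 ≤ lam i * ((⇑(b i)) ⬝ᵥ (P n).mulVec (⇑(b i))) :=
            mul_nonneg hpi.le (hq0 n _)
          have t2 : 0 ≤ lam j * ((⇑(b j)) ⬝ᵥ (P n).mulVec (⇑(b j))) :=
            mul_nonneg hpj.le (hq0 n _)
          have : lam i * ((⇑(b i)) ⬝ᵥ (P n).mulVec (⇑(b i))) = 0 := by linarith
          rcases mul_eq_zero.mp this with h' | h'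
          · exact absurd h' hi
          · exact h'
  · intro h x y hxy
    by_contra hc
    push_neg at hc
    obtain ⟨hne, hne'⟩ := hc
    apply h
    refine ⟨vecMulVec x x - vecMulVec y y, ?_, ?_, ?_⟩
    · ext i j
      simp only [transpose_apply, Matrix.sub_apply, vecMulVec_apply]
      ring
    · intro n
      rw [Matrix.sub_mul, trace_sub, aux_trace_vecMulVec_mul, aux_trace_vecMulVec_mul,
        hxy n, sub_self]
    · have hA0 : vecMulVec x x - vecMulVec y y ≠ 0 := by
        intro h0
        rcases aux_vecMulVec_inj (sub_eq_zero.mp h0) with h' | h'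
        · exact hne h'
        · exact hne' h'
      have hr1 : 1 ≤ (vecMulVec x x - vecMulVec y y).rank :=
        Nat.one_le_iff_ne_zero.mpr fun hr => hA0 (aux_rank_eq_zero_iff.mp hr)
      have hr2 : (vecMulVec x x - vecMulVec y y).rank ≤ 2 := by
        have heq : vecMulVec x x - vecMulVec y y = vecMulVec x x + vecMulVec y (-y) := by
          ext i j
          simp only [Matrix.sub_apply, Matrix.add_apply, vecMulVec_apply, Pi.neg_apply]
          ring
        rw [heq]
        have t1 := aux_rank_vecMulVec_le x x
        have t2 := aux_rank_vecMulVec_le y (-y)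
        have := aux_rank_add_le (vecMulVec x x) (vecMulVec y (-y))
        omega
      omega
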